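/- Let d, k ≥ 1, let O be a real k×d matrix, let P be a real d×d positive-definite matrix, let R be a real k×k positive-definite matrix, and let m ∈ ℝ^d. Then for every y ∈ ℝ^k: sup_{x∈ℝ^d} N̄(x; m, P) · N̄(y; O x, R) = N̄(y; O m, O P Oᵀ + R), where O P Oᵀ + R is positive definite. -/

import Mathlib

open Matrix

/-- The Gaussian possibility function `N̄(x; m, S) = exp(−½ (x−m)ᵀ S⁻¹ (x−m))`. -/
noncomputable def gaussPoss {d : ℕ} (m : Fin d → ℝ) (S : Matrix (Fin d) (Fin d) ℝ)
    (x : Fin d → ℝ) : ℝ :=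
  Real.exp (-(1 / 2 : ℝ) * ((x - m) ⬝ᵥ (S⁻¹ *ᵥ (x - m))))

lemma dotSymm {n : ℕ} (A : Matrix (Fin n) (Fin n) ℝ) (hA : Aᵀ = A)
    (p q : Fin n → ℝ) : q ⬝ᵥ (A *ᵥ p) = p ⬝ᵥ (A *ᵥ q) := by
  nth_rewrite 1 [← hA]
  rw [mulVec_transpose, dotProduct_mulVec, dotProduct_comm]

lemma expandQuad {n : ℕ} (A : Matrix (Fin n) (Fin n) ℝ) (hA : Aᵀ = A)
    (p q : Fin n → ℝ) :
    (p - q) ⬝ᵥ (A *ᵥ (p - q)) =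
      p ⬝ᵥ (A *ᵥ p) - 2 * (p ⬝ᵥ (A *ᵥ q)) + q ⬝ᵥ (A *ᵥ q) := by
  rw [mulVec_sub, sub_dotProduct, dotProduct_sub, dotProduct_sub,
    dotSymm A hA p q]
  ring

lemma dotTransposeMove {n k : ℕ} (O : Matrix (Fin k) (Fin n) ℝ)
    (u : Fin n → ℝ) (v : Fin k → ℝ) : u ⬝ᵥ (Oᵀ *ᵥ v) = (O *ᵥ u) ⬝ᵥ v := by
  rw [dotProduct_mulVec, vecMul_transpose]

lemma realPosSemidef_nonneg {n : ℕ} {A : Matrix (Fin n) (Fin n) ℝ}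
    (hA : A.PosSemidef) (v : Fin n → ℝ) : 0 ≤ v ⬝ᵥ (A *ᵥ v) := by
  simpa using hA.dotProduct_mulVec_nonneg v

lemma posDefSymm {n : ℕ} {A : Matrix (Fin n) (Fin n) ℝ} (hA : A.PosDef) :
    Aᵀ = A := by
  rw [← conjTranspose_eq_transpose_of_trivial]; exact hA.isHermitian

set_option maxHeartbeats 1000000 in
theorem stmt_15 {d k : ℕ} (hd : 1 ≤ d) (hk : 1 ≤ k)
    (O : Matrix (Fin k) (Fin d) ℝ) (P : Matrix (Fin d) (Fin d) ℝ)
    (R : Matrix (Fin k) (Fin k) ℝ) (hP : P.PosDef) (hR : R.PosDef)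
    (m : Fin d → ℝ) :
    (O * P * Oᵀ + R).PosDef ∧
      ∀ y : Fin k → ℝ,
        (⨆ x : Fin d → ℝ, gaussPoss m P x * gaussPoss (O *ᵥ x) R y) =
          gaussPoss (O *ᵥ m) (O * P * Oᵀ + R) y := by
  have hOPOT : (O * P * Oᵀ).PosSemidef := by
    have := hP.posSemidef.mul_mul_conjTranspose_same O
    simpa [conjTranspose_eq_transpose_of_trivial] using this
  have hS : (O * P * Oᵀ + R).PosDef := Matrix.PosDef.posSemidef_add hOPOT hR
  refine ⟨hS, fun y => ?_⟩
  set S : Matrix (Fin k) (Fin k) ℝ := O * P * Oᵀ + R with hSdef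
  set M : Matrix (Fin d) (Fin d) ℝ := P⁻¹ + Oᵀ * R⁻¹ * O with hMdef
  have hOtRO : (Oᵀ * R⁻¹ * O).PosSemidef := by
    have := hR.inv.posSemidef.conjTranspose_mul_mul_same O
    simpa [conjTranspose_eq_transpose_of_trivial] using this
  have hM : M.PosDef := hP.inv.add_posSemidef hOtRO
  have hPdet : IsUnit P.det := isUnit_iff_ne_zero.mpr hP.det_pos.ne'
  have hRdet : IsUnit R.det := isUnit_iff_ne_zero.mpr hR.det_pos.ne'
  have hMdet : IsUnit M.det := isUnit_iff_ne_zero.mpr hM.det_pos.ne'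
  have hRR : R * R⁻¹ = 1 := mul_nonsing_inv R hRdet
  have hMM : M * M⁻¹ = 1 := mul_nonsing_inv M hMdet
  have hRs : (R⁻¹)ᵀ = R⁻¹ := posDefSymm hR.inv
  have hMs : Mᵀ = M := posDefSymm hM
  -- Woodbury-type identity
  have h0 : Oᵀ * R⁻¹ * O = M - P⁻¹ := by rw [hMdef]; abel
  have hSW : S * (R⁻¹ - R⁻¹ * O * (M⁻¹ * (Oᵀ * R⁻¹))) = 1 := by
    have hMX : M * (M⁻¹ * (Oᵀ * R⁻¹)) = Oᵀ * R⁻¹ :=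
      mul_nonsing_inv_cancel_left M _ hMdet
    have h1 : Oᵀ * (R⁻¹ * (O * (M⁻¹ * (Oᵀ * R⁻¹))))
        = Oᵀ * R⁻¹ - P⁻¹ * (M⁻¹ * (Oᵀ * R⁻¹)) := by
      calc Oᵀ * (R⁻¹ * (O * (M⁻¹ * (Oᵀ * R⁻¹))))
          = (Oᵀ * R⁻¹ * O) * (M⁻¹ * (Oᵀ * R⁻¹)) := by
            simp only [Matrix.mul_assoc]
        _ = (M - P⁻¹) * (M⁻¹ * (Oᵀ * R⁻¹)) := by rw [h0]
        _ = M * (M⁻¹ * (Oᵀ * R⁻¹)) - P⁻¹ * (M⁻¹ * (Oᵀ * R⁻¹)) :=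
            Matrix.sub_mul _ _ _
        _ = Oᵀ * R⁻¹ - P⁻¹ * (M⁻¹ * (Oᵀ * R⁻¹)) := by rw [hMX]
    have h2 : P * (Oᵀ * (R⁻¹ * (O * (M⁻¹ * (Oᵀ * R⁻¹)))))
        = P * (Oᵀ * R⁻¹) - M⁻¹ * (Oᵀ * R⁻¹) := by
      rw [h1, Matrix.mul_sub, mul_nonsing_inv_cancel_left P _ hPdet]
    have h3 : O * (P * (Oᵀ * (R⁻¹ * (O * (M⁻¹ * (Oᵀ * R⁻¹))))))
        = O * (P * (Oᵀ * R⁻¹)) - O * (M⁻¹ * (Oᵀ * R⁻¹)) := by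
      rw [h2, Matrix.mul_sub]
    have h4 : R * (R⁻¹ * (O * (M⁻¹ * (Oᵀ * R⁻¹)))) = O * (M⁻¹ * (Oᵀ * R⁻¹)) :=
      mul_nonsing_inv_cancel_left R _ hRdet
    rw [hSdef]
    simp only [Matrix.mul_sub, Matrix.sub_mul, Matrix.add_mul, Matrix.mul_add,
      Matrix.mul_assoc]
    rw [h3, h4, hRR]
    abel
  have hSinv : S⁻¹ = R⁻¹ - R⁻¹ * O * (M⁻¹ * (Oᵀ * R⁻¹)) := inv_eq_right_inv hSW
  -- vectors
  set z : Fin k → ℝ := y - O *ᵥ m with hzdef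
  set t : Fin d → ℝ := Oᵀ *ᵥ (R⁻¹ *ᵥ z) with htdef
  set w : Fin d → ℝ := M⁻¹ *ᵥ t with hwdef
  have hMw : M *ᵥ w = t := by
    rw [hwdef, mulVec_mulVec, hMM, one_mulVec]
  set Q : (Fin d → ℝ) → ℝ := fun x =>
    (x - m) ⬝ᵥ (P⁻¹ *ᵥ (x - m)) + (y - O *ᵥ x) ⬝ᵥ (R⁻¹ *ᵥ (y - O *ᵥ x)) with hQdef
  have hF : ∀ x, gaussPoss m P x * gaussPoss (O *ᵥ x) R y
      = Real.exp (-(1 / 2 : ℝ) * Q x) := by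
    intro x
    simp only [gaussPoss, hQdef, ← Real.exp_add]
    congr 1
    ring
  have hQ : ∀ x, Q x = ((x - m) - w) ⬝ᵥ (M *ᵥ ((x - m) - w)) + z ⬝ᵥ (S⁻¹ *ᵥ z) := by
    intro x
    have hyx : y - O *ᵥ x = z - O *ᵥ (x - m) := by
      rw [hzdef, mulVec_sub]; abel
    have h1 : (z - O *ᵥ (x - m)) ⬝ᵥ (R⁻¹ *ᵥ (z - O *ᵥ (x - m)))
        = z ⬝ᵥ (R⁻¹ *ᵥ z) - 2 * ((O *ᵥ (x - m)) ⬝ᵥ (R⁻¹ *ᵥ z))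
          + (O *ᵥ (x - m)) ⬝ᵥ (R⁻¹ *ᵥ (O *ᵥ (x - m))) := by
      rw [expandQuad _ hRs, dotSymm _ hRs (O *ᵥ (x - m)) z]
    have humw : (x - m) ⬝ᵥ (M *ᵥ w) = (O *ᵥ (x - m)) ⬝ᵥ (R⁻¹ *ᵥ z) := by
      rw [hMw, htdef, dotTransposeMove]
    have hwMw : w ⬝ᵥ (M *ᵥ w) = w ⬝ᵥ t := by rw [hMw]
    have huMu : (x - m) ⬝ᵥ (M *ᵥ (x - m))
        = (x - m) ⬝ᵥ (P⁻¹ *ᵥ (x - m))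
          + (O *ᵥ (x - m)) ⬝ᵥ (R⁻¹ *ᵥ (O *ᵥ (x - m))) := by
      rw [hMdef, add_mulVec, dotProduct_add]
      congr 1
      rw [show (Oᵀ * R⁻¹ * O) *ᵥ (x - m) = Oᵀ *ᵥ (R⁻¹ *ᵥ (O *ᵥ (x - m))) from by
        rw [← mulVec_mulVec, ← mulVec_mulVec]]
      rw [dotTransposeMove]
    have h2 : ((x - m) - w) ⬝ᵥ (M *ᵥ ((x - m) - w))
        = ((x - m) ⬝ᵥ (P⁻¹ *ᵥ (x - m))
            + (O *ᵥ (x - m)) ⬝ᵥ (R⁻¹ *ᵥ (O *ᵥ (x - m))))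
          - 2 * ((O *ᵥ (x - m)) ⬝ᵥ (R⁻¹ *ᵥ z)) + w ⬝ᵥ t := by
      rw [expandQuad _ hMs, humw, hwMw, huMu]
    have h3 : z ⬝ᵥ (S⁻¹ *ᵥ z) = z ⬝ᵥ (R⁻¹ *ᵥ z) - w ⬝ᵥ t := by
      have hvec : (R⁻¹ * O * (M⁻¹ * (Oᵀ * R⁻¹))) *ᵥ z = R⁻¹ *ᵥ (O *ᵥ w) := by
        rw [← mulVec_mulVec, ← mulVec_mulVec, ← mulVec_mulVec, ← mulVec_mulVec,
          ← htdef, ← hwdef]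
      have hf2 : z ⬝ᵥ (R⁻¹ *ᵥ (O *ᵥ w)) = w ⬝ᵥ t := by
        rw [dotSymm _ hRs (O *ᵥ w) z, ← dotTransposeMove, ← htdef]
      rw [hSinv, sub_mulVec, dotProduct_sub, hvec, hf2]
    simp only [hQdef]
    rw [hyx, h1, h2, h3]
    ring
  set x₀ : Fin d → ℝ := m + w with hx₀def
  have hx₀ : Q x₀ = z ⬝ᵥ (S⁻¹ *ᵥ z) := by
    rw [hQ x₀, hx₀def]
    have h0' : (m + w - m) - w = 0 := by rw [add_sub_cancel_left, sub_self]
    rw [h0', mulVec_zero, dotProduct_zero, zero_add]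
  have htarget : gaussPoss (O *ᵥ m) S y
      = Real.exp (-(1 / 2 : ℝ) * (z ⬝ᵥ (S⁻¹ *ᵥ z))) := by
    rw [gaussPoss, ← hzdef]
  have hub : ∀ x, gaussPoss m P x * gaussPoss (O *ᵥ x) R y
      ≤ Real.exp (-(1 / 2 : ℝ) * (z ⬝ᵥ (S⁻¹ *ᵥ z))) := by
    intro x
    rw [hF x, hQ x]
    apply Real.exp_le_exp.mpr
    have := realPosSemidef_nonneg hM.posSemidef ((x - m) - w)
    linarith
  refine le_antisymm (ciSup_le (by rw [htarget]; exact hub)) ?_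
  have hbdd : BddAbove (Set.range fun x => gaussPoss m P x * gaussPoss (O *ᵥ x) R y) :=
    ⟨Real.exp (-(1 / 2 : ℝ) * (z ⬝ᵥ (S⁻¹ *ᵥ z))), by rintro _ ⟨x, rfl⟩; exact hub x⟩
  have hle := le_ciSup hbdd x₀
  rw [hF x₀, hx₀, ← htarget] at hle
  exact hle
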